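/- For integers d2 ≥ d1 ≥ 2 and any real k ∈ [-d1/d2, 1], the sum P_X(k) + Q_X(k) is strictly negative, where P_X(k) = [d2(d1d2 - 2d1 - d2 + 1)k² + 2(d2-1)(d1-1)d1·k + d1²(d1-1)]·(1-k)/(d1(n-1)) and Q_X(k) = 4k(1 + d2·k/(2d1))(d1 + d2·k + d2·k/(2d1)) + (2 + 2k + 3d2·k/d1)·(d1 + d2·k² - (d1 + d2·k)²)/(n-1), with n = d1 + d2. -/
import Mathlib


/-- P_X(k) + Q_X(k) < 0 for k ∈ [-d1/d2, 1], with n = d1 + d2. -/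
theorem stmt_7 (d1 d2 : ℕ) (h1 : 2 ≤ d1) (h2 : d1 ≤ d2) (k : ℝ)
    (hk1 : -(d1 : ℝ)/d2 ≤ k) (hk2 : k ≤ 1) :
    (((d2:ℝ)*(d1*d2 - 2*d1 - d2 + 1)*k^2 + 2*(d2 - 1)*(d1 - 1)*d1*k + d1^2*(d1 - 1))
        * (1 - k) / (d1 * ((d1:ℝ) + d2 - 1))
      + (4*k*(1 + d2*k/(2*d1)) * ((d1:ℝ) + d2*k + d2*k/(2*d1))
        + (2 + 2*k + 3*(d2:ℝ)*k/d1) * ((d1:ℝ) + d2*k^2 - (d1 + d2*k)^2) / ((d1:ℝ) + d2 - 1)))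
      < 0 := by
  set a : ℝ := (d1 : ℝ) with ha_def
  set b : ℝ := (d2 : ℝ) with hb_def
  have ha2 : (2:ℝ) ≤ a := by rw [ha_def]; exact_mod_cast h1
  have hab : a ≤ b := by rw [ha_def, hb_def]; exact_mod_cast h2
  have ha : (0:ℝ) < a := by linarith
  have hb : (0:ℝ) < b := by linarith
  have hden : (0:ℝ) < a + b - 1 := by linarith
  have hv : (0:ℝ) ≤ a + b*k := by
    have h := (div_le_iff₀ hb).mp hk1
    nlinarith
  have hs : (0:ℝ) ≤ a - 2 := by linarith
  have hw : (0:ℝ) ≤ b - a := by linarith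
  have hm : (0:ℝ) ≤ 1 - k := by linarith
  have key : (-4*b^2*k^3 + 4*b^3*k^3 - 4*a*b*k^2 - 4*a*b*k^3 + 4*a*b^2*k^2
      + 12*a*b^2*k^3 - 4*a*b^3*k^3 + 8*a^2*k - 8*a^2*k^2 + 4*a^2*b*k - 8*a^2*b*k^2
      + 16*a^2*b*k^3 - 4*a^2*b^2*k^2 - 4*a^2*b^2*k^3 + 4*a^3 - 12*a^3*k + 8*a^3*k^2
      - 4*a^3*b*k - 4*a^4 + 4*a^4*k) < 0 := by
    rcases le_or_gt 0 k with hkp | hkn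
    · linarith [mul_nonneg hkp (mul_nonneg hkp hm),
        (mul_nonneg hkp hm),
        (mul_nonneg hs (mul_nonneg hkp (mul_nonneg hkp hm))),
        (mul_nonneg hs (mul_nonneg hkp (mul_nonneg hm hv))),
        (mul_nonneg hs (mul_nonneg hkp (mul_nonneg hv hv))),
        (mul_nonneg hs hm),
        (mul_nonneg hs (mul_nonneg hm hm)),
        (mul_nonneg hs (mul_nonneg hm hv)),
        (mul_nonneg hs (mul_nonneg hs (mul_nonneg hkp (mul_nonneg hv hv)))),
        (mul_nonneg hs (mul_nonneg hs (mul_nonneg hm hm))),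
        (mul_nonneg hs (mul_nonneg hs (mul_nonneg hm hv))),
        (mul_nonneg hs (mul_nonneg hs (mul_nonneg hs (mul_nonneg hkp hkp)))),
        (mul_nonneg hs (mul_nonneg hs (mul_nonneg hs (mul_nonneg hkp (mul_nonneg hkp hv))))),
        (mul_nonneg hs (mul_nonneg hs (mul_nonneg hs (mul_nonneg hm hm)))),
        (mul_nonneg hs (mul_nonneg hs (mul_nonneg hs (mul_nonneg hm (mul_nonneg hm hv))))),
        (mul_nonneg hs (mul_nonneg hs (mul_nonneg hs hs))),
        (mul_nonneg hs (mul_nonneg hs (mul_nonneg hs (mul_nonneg hs hkp)))),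
        (mul_nonneg hs (mul_nonneg hs (mul_nonneg hs (mul_nonneg hw hkp)))),
        (mul_nonneg hs (mul_nonneg hs (mul_nonneg hw (mul_nonneg hkp (mul_nonneg hkp hv))))),
        (mul_nonneg hs (mul_nonneg hs (mul_nonneg hw (mul_nonneg hkp hm)))),
        (mul_nonneg hs (mul_nonneg hw hkp)),
        (mul_nonneg hs (mul_nonneg hw (mul_nonneg hkp (mul_nonneg hkp hv)))),
        (mul_nonneg hs (mul_nonneg hw (mul_nonneg hkp hm))),
        (mul_nonneg hs (mul_nonneg hw (mul_nonneg hw (mul_nonneg hkp (mul_nonneg hkp hv))))),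
        (mul_nonneg hw hkp),
        (mul_nonneg hw (mul_nonneg hkp (mul_nonneg hkp hm))),
        (mul_nonneg hw (mul_nonneg hkp (mul_nonneg hkp hv))),
        (mul_nonneg hw (mul_nonneg hw (mul_nonneg hkp (mul_nonneg hkp hv))))]
    · have hn : (0:ℝ) ≤ -k := by linarith
      have hn' : (0:ℝ) < -k := by linarith
      have hp : (0:ℝ) ≤ 1 + k := by
        have : a/b ≤ 1 := (div_le_one hb).mpr hab
        have h' : -(1:ℝ) ≤ -a/b := by
          rw [neg_div]; linarith
        linarith
      linarith [hn', mul_nonneg hn hn,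
        (mul_nonneg hn (mul_nonneg hn hn)),
        (mul_nonneg hn (mul_nonneg hv hv)),
        (mul_nonneg hs hn),
        (mul_nonneg hs (mul_nonneg hn hn)),
        (mul_nonneg hs (mul_nonneg hn (mul_nonneg hn hn))),
        (mul_nonneg hs (mul_nonneg hn (mul_nonneg hv hp))),
        (mul_nonneg hs (mul_nonneg hs hn)),
        (mul_nonneg hs (mul_nonneg hs (mul_nonneg hn hn))),
        (mul_nonneg hs (mul_nonneg hs (mul_nonneg hn hv))),
        (mul_nonneg hs (mul_nonneg hs (mul_nonneg hn (mul_nonneg hv hp)))),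
        (mul_nonneg hs (mul_nonneg hs (mul_nonneg hs hn))),
        (mul_nonneg hs (mul_nonneg hs (mul_nonneg hs (mul_nonneg hn hn)))),
        (mul_nonneg hs (mul_nonneg hs (mul_nonneg hs (mul_nonneg hn (mul_nonneg hn hv))))),
        (mul_nonneg hs (mul_nonneg hs (mul_nonneg hs (mul_nonneg hn hv)))),
        (mul_nonneg hs (mul_nonneg hs (mul_nonneg hw (mul_nonneg hn (mul_nonneg hn hv))))),
        (mul_nonneg hs (mul_nonneg hs (mul_nonneg hw (mul_nonneg hn hv)))),
        (mul_nonneg hs (mul_nonneg hv (mul_nonneg hv hv))),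
        (mul_nonneg hs (mul_nonneg hw (mul_nonneg hn hn))),
        (mul_nonneg hs (mul_nonneg hw (mul_nonneg hn (mul_nonneg hn hv)))),
        (mul_nonneg hs (mul_nonneg hw (mul_nonneg hn hv))),
        (mul_nonneg hv (mul_nonneg hv hv)),
        (mul_nonneg hw (mul_nonneg hn hn)),
        (mul_nonneg hw (mul_nonneg hn (mul_nonneg hn hn))),
        (mul_nonneg hw (mul_nonneg hn hv))]
  have hM : (0:ℝ) < 4*a^2*(a+b-1) := by positivity
  have heq : ((b*(a*b - 2*a - b + 1)*k^2 + 2*(b - 1)*(a - 1)*a*k + a^2*(a - 1))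
        * (1 - k) / (a * (a + b - 1))
      + (4*k*(1 + b*k/(2*a)) * (a + b*k + b*k/(2*a))
        + (2 + 2*k + 3*b*k/a) * (a + b*k^2 - (a + b*k)^2) / (a + b - 1)))
      * (4*a^2*(a+b-1))
      = (-4*b^2*k^3 + 4*b^3*k^3 - 4*a*b*k^2 - 4*a*b*k^3 + 4*a*b^2*k^2
      + 12*a*b^2*k^3 - 4*a*b^3*k^3 + 8*a^2*k - 8*a^2*k^2 + 4*a^2*b*k - 8*a^2*b*k^2
      + 16*a^2*b*k^3 - 4*a^2*b^2*k^2 - 4*a^2*b^2*k^3 + 4*a^3 - 12*a^3*k + 8*a^3*k^2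
      - 4*a^3*b*k - 4*a^4 + 4*a^4*k) := by
    field_simp
    ring
  set E := ((b*(a*b - 2*a - b + 1)*k^2 + 2*(b - 1)*(a - 1)*a*k + a^2*(a - 1))
        * (1 - k) / (a * (a + b - 1))
      + (4*k*(1 + b*k/(2*a)) * (a + b*k + b*k/(2*a))
        + (2 + 2*k + 3*b*k/a) * (a + b*k^2 - (a + b*k)^2) / (a + b - 1))) with hE
  have hE2 : E = (-4*b^2*k^3 + 4*b^3*k^3 - 4*a*b*k^2 - 4*a*b*k^3 + 4*a*b^2*k^2
      + 12*a*b^2*k^3 - 4*a*b^3*k^3 + 8*a^2*k - 8*a^2*k^2 + 4*a^2*b*k - 8*a^2*b*k^2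
      + 16*a^2*b*k^3 - 4*a^2*b^2*k^2 - 4*a^2*b^2*k^3 + 4*a^3 - 12*a^3*k + 8*a^3*k^2
      - 4*a^3*b*k - 4*a^4 + 4*a^4*k) / (4*a^2*(a+b-1)) := by
    rw [eq_div_iff hM.ne']
    exact heq
  rw [hE2]
  exact div_neg_of_neg_of_pos key hM
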